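/- Let n ≥ 1 be an integer, ε = (ε_1, …, ε_n) ∈ {±1}^n, and let A be an n×n real SSR(ε) matrix. Then there exists a column vector c ∈ ℝ^n such that the n×(n+1) matrix [A | c], obtained by adjoining c as a new last column to the right border of A, is SSR(ε). -/

import Mathlib

open Matrix Finset

/-- `A` is strictly sign regular of order `p` with sign pattern `ε` (`SSR_p(ε)`):
for every `k ∈ {1, …, p}` (here `k = kk.val + 1` for `kk : Fin p`), every `k × k` minor of `A`
(the determinant of the submatrix on any `k` rows and `k` columns taken in increasing order)
has sign `ε k`, i.e. `ε k` times the minor is strictly positive. -/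
def IsSSRp (p : ℕ) {m n : ℕ} (A : Matrix (Fin m) (Fin n) ℝ) (ε : Fin p → ℝ) : Prop :=
  ∀ (kk : Fin p) (r : Fin (kk.val + 1) → Fin m) (c : Fin (kk.val + 1) → Fin n),
    StrictMono r → StrictMono c → 0 < ε kk * (A.submatrix r c).det


lemma det_updateColumn_sum_mul {N : ℕ} (M : Matrix (Fin N) (Fin N) ℝ) (j : Fin N)
    {α : Type*} [DecidableEq α] (t : Finset α) (f : α → ℝ) (v : α → Fin N → ℝ) :
    (M.updateCol j (fun i => ∑ a ∈ t, f a * v a i)).det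
      = ∑ a ∈ t, f a * (M.updateCol j (v a)).det := by
  induction t using Finset.induction with
  | empty =>
      simp only [Finset.sum_empty]
      exact Matrix.det_eq_zero_of_column_eq_zero j (fun i => by simp)
  | insert a s ha ih =>
      have : (fun i => ∑ b ∈ insert a s, f b * v b i)
          = (f a • v a) + (fun i => ∑ b ∈ s, f b * v b i) := by
        funext i; simp [Finset.sum_insert ha]
      rw [this, Matrix.det_updateCol_add, Matrix.det_updateCol_smul, ih,
        Finset.sum_insert ha]

lemma strictMono_snoc {K n : ℕ} (u : Fin K → Fin n) (j : Fin n) (hu : StrictMono u)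
    (hj : ∀ l, u l < j) : StrictMono (Fin.snoc u j) := by
  intro a b hab
  rcases Fin.eq_castSucc_or_eq_last b with ⟨b', rfl⟩ | rfl
  · rcases Fin.eq_castSucc_or_eq_last a with ⟨a', rfl⟩ | rfl
    · simp only [Fin.snoc_castSucc]
      exact hu (Fin.castSucc_lt_castSucc_iff.mp hab)
    · exact absurd hab (not_lt.mpr (Fin.castSucc_lt_last b').le)
  · rcases Fin.eq_castSucc_or_eq_last a with ⟨a', rfl⟩ | rfl
    · simpa using hj a'
    · exact absurd hab (lt_irrefl _)

lemma sign_lemma {n : ℕ} (ε : Fin n → ℝ) (A : Matrix (Fin n) (Fin n) ℝ)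
    (hA : IsSSRp n A ε) (kk : Fin n) (r : Fin (kk.val + 1) → Fin n) (hr : StrictMono r) :
    ∀ (E : ℕ) (u : Fin kk.val → Fin n) (j : Fin n), StrictMono u → (∀ l, u l ≠ j) →
      (∀ x : Fin n, j < x → ∃ l, u l = x) → E = n - 1 - j.val →
      0 < ε kk * ((-1 : ℝ) ^ E * (A.submatrix r (Fin.snoc u j)).det) := by
  intro E
  induction E with
  | zero =>
      intro u j hu hne _ hE
      have hjv : j.val = n - 1 := by have := j.isLt; omega
      have hlt : ∀ l, u l < j := by
        intro l
        have h1 : (u l).val ≠ j.val := fun h => hne l (Fin.ext h)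
        have := (u l).isLt
        exact Fin.lt_iff_val_lt_val.mpr (by omega)
      simpa using hA kk r (Fin.snoc u j) hr (strictMono_snoc u j hu hlt)
  | succ E ih =>
      intro u j hu hne hsurj hE
      have hjn : j.val + 1 < n := by have := j.isLt; omega
      set j' : Fin n := ⟨j.val + 1, hjn⟩ with hj'
      have hjj' : j < j' := by simp [Fin.lt_iff_val_lt_val, hj']
      obtain ⟨p, hp⟩ := hsurj j' hjj'
      set u' := Function.update u p j with hu'
      have hu'mono : StrictMono u' := by
        intro a b hab
        rw [hu']
        by_cases hap : a = p
        · have hbp : b ≠ p := by rintro rfl; rw [hap] at hab; exact absurd hab (lt_irrefl _)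
          rw [hap, Function.update_self, Function.update_of_ne hbp]
          calc j < j' := hjj'
            _ = u p := hp.symm
            _ < u b := hu (hap ▸ hab)
        · by_cases hbp : b = p
          · rw [hbp, Function.update_self, Function.update_of_ne hap]
            have hab' : a < p := hbp ▸ hab
            have h1 : u a < j' := hp ▸ hu hab'
            have h2 : (u a).val ≠ j.val := fun h => hne a (Fin.ext h)
            have := Fin.lt_iff_val_lt_val.mp h1
            exact Fin.lt_iff_val_lt_val.mpr (by simp [hj'] at this ⊢; omega)
          · rw [Function.update_of_ne hap, Function.update_of_ne hbp]
            exact hu hab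
      have hne' : ∀ l, u' l ≠ j' := by
        intro l hl
        rcases eq_or_ne l p with rfl | hlp
        · rw [hu', Function.update_self] at hl
          exact absurd (Fin.ext_iff.mp hl) (by simp [hj'])
        · rw [hu', Function.update_of_ne hlp] at hl
          exact hlp (hu.injective (hl.trans hp.symm))
      have hsurj' : ∀ x : Fin n, j' < x → ∃ l, u' l = x := by
        intro x hx
        obtain ⟨l, hl⟩ := hsurj x (hjj'.trans hx)
        refine ⟨l, ?_⟩
        have hlp : l ≠ p := by
          rintro rfl
          rw [hl] at hp; rw [hp] at hx; exact absurd hx (lt_irrefl _)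
        rw [hu', Function.update_of_ne hlp]; exact hl
      have hE' : E = n - 1 - j'.val := by simp [hj']; omega
      have hIH := ih u' j' hu'mono hne' hsurj' hE'
      -- relate the two determinants via a column swap
      have hswap : Fin.snoc u' j' = (Fin.snoc u j) ∘ (Equiv.swap (Fin.castSucc p) (Fin.last kk.val)) := by
        funext l
        rcases Fin.eq_castSucc_or_eq_last l with ⟨l', rfl⟩ | rfl
        · rcases eq_or_ne l' p with rfl | hlp
          · simp [Equiv.swap_apply_left, hu']
          · have : Equiv.swap (Fin.castSucc p) (Fin.last kk.val) (Fin.castSucc l')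
                = Fin.castSucc l' := by
              apply Equiv.swap_apply_of_ne_of_ne
              · exact fun h => hlp (Fin.castSucc_injective _ h)
              · exact (Fin.castSucc_lt_last l').ne
            simp [this, hu', Function.update_of_ne hlp]
        · simp [Equiv.swap_apply_right, hp]
      have hdet : (A.submatrix r (Fin.snoc u' j')).det
          = - (A.submatrix r (Fin.snoc u j)).det := by
        rw [hswap]
        have : A.submatrix r ((Fin.snoc u j) ∘ (Equiv.swap (Fin.castSucc p) (Fin.last kk.val)))
            = (A.submatrix r (Fin.snoc u j)).submatrix id
                (Equiv.swap (Fin.castSucc p) (Fin.last kk.val)) := by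
          rw [Matrix.submatrix_submatrix]; rfl
        rw [this, Matrix.det_permute',
          Equiv.Perm.sign_swap (Fin.castSucc_lt_last p).ne]
        simp
      rw [hdet] at hIH
      have : ε kk * ((-1 : ℝ) ^ (E + 1) * (A.submatrix r (Fin.snoc u j)).det)
          = ε kk * ((-1 : ℝ) ^ E * -(A.submatrix r (Fin.snoc u j)).det) := by ring
      rw [this]; exact hIH

lemma key_lemma {n : ℕ} (ε : Fin n → ℝ) (A : Matrix (Fin n) (Fin n) ℝ) (hA : IsSSRp n A ε)
    (kk : Fin n) (r : Fin (kk.val + 1) → Fin n) (cc : Fin (kk.val + 1) → Fin (n + 1))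
    (hr : StrictMono r) (hcc : StrictMono cc) :
    ∀ᶠ δ in nhdsWithin (0:ℝ) (Set.Ioi 0),
      0 < ε kk * (((Matrix.of fun i => Fin.snoc (A i)
        (∑ jj : Fin n, (-δ) ^ (n - 1 - jj.val) * A i jj)) :
          Matrix (Fin n) (Fin (n+1)) ℝ).submatrix r cc).det := by
  by_cases hlast : cc (Fin.last kk.val) = Fin.last n
  case neg =>
    -- the minor does not use the last column : it is a minor of A
    have hlt : ∀ l, cc l < Fin.last n := fun l =>
      lt_of_le_of_lt (hcc.monotone (Fin.le_last l)) (lt_of_le_of_ne (Fin.le_last _) hlast)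
    refine Filter.Eventually.of_forall (fun δ => ?_)
    have heq : ((Matrix.of fun i => Fin.snoc (A i)
        (∑ jj : Fin n, (-δ) ^ (n - 1 - jj.val) * A i jj)) :
          Matrix (Fin n) (Fin (n+1)) ℝ).submatrix r cc
        = A.submatrix r (fun l => (cc l).castPred (hlt l).ne) := by
      funext i l
      simp only [Matrix.submatrix_apply, Matrix.of_apply]
      conv_lhs => rw [← Fin.castSucc_castPred (cc l) (hlt l).ne]
      rw [Fin.snoc_castSucc]
    rw [heq]
    refine hA kk r _ hr (fun a b hab => ?_)
    have := hcc hab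
    simp only [Fin.lt_iff_val_lt_val] at this ⊢
    simpa using this
  case pos =>
    have hne : ∀ l : Fin kk.val, cc (Fin.castSucc l) ≠ Fin.last n := by
      intro l h
      have h2 := hcc (Fin.castSucc_lt_last l)
      rw [h, hlast] at h2
      exact absurd h2 (lt_irrefl _)
    set u : Fin kk.val → Fin n := fun l => (cc (Fin.castSucc l)).castPred (hne l) with hu
    have humono : StrictMono u := by
      intro a b hab
      have := hcc (Fin.castSucc_lt_castSucc_iff.mpr hab)
      simp only [Fin.lt_iff_val_lt_val] at this ⊢
      simpa [hu] using this
    set S : Finset (Fin n) := Finset.image u Finset.univ with hS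
    have hScard : S.card < n := by
      have h1 : S.card ≤ kk.val := le_trans Finset.card_image_le (by simp)
      have := kk.isLt
      omega
    have hSc : Sᶜ.Nonempty := by
      rw [← Finset.card_pos, Finset.card_compl]
      simp only [Fintype.card_fin]
      omega
    set jstar : Fin n := Sᶜ.max' hSc with hjstar
    have hjstarmem : jstar ∉ S := by
      have := Finset.max'_mem _ hSc
      rw [Finset.mem_compl] at this
      exact this
    have hAbove : ∀ x : Fin n, jstar < x → x ∈ S := by
      intro x hx
      by_contra h
      exact absurd hx (not_lt.mpr (Finset.le_max' _ x (Finset.mem_compl.mpr h)))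
    set E : ℕ := n - 1 - jstar.val with hE
    set D : Fin n → ℝ := fun j => (A.submatrix r (Fin.snoc u j)).det with hD
    -- update-column description of the submatrix
    have hupdate : ∀ (δ : ℝ) (j : Fin n),
        Matrix.updateCol (A.submatrix r (Fin.snoc u jstar)) (Fin.last kk.val)
          (fun i => A (r i) j) = A.submatrix r (Fin.snoc u j) := by
      intro δ j
      funext i l
      rcases Fin.eq_castSucc_or_eq_last l with ⟨l', rfl⟩ | rfl
      · rw [Matrix.updateCol_ne (Fin.castSucc_lt_last l').ne]
        simp [Fin.snoc_castSucc]
      · simp [Matrix.updateCol_self, Fin.snoc_last]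
    have hsub : ∀ δ : ℝ, ((Matrix.of fun i => Fin.snoc (A i)
        (∑ jj : Fin n, (-δ) ^ (n - 1 - jj.val) * A i jj)) :
          Matrix (Fin n) (Fin (n+1)) ℝ).submatrix r cc
        = Matrix.updateCol (A.submatrix r (Fin.snoc u jstar)) (Fin.last kk.val)
            (fun i => ∑ jj : Fin n, (-δ) ^ (n - 1 - jj.val) * A (r i) jj) := by
      intro δ
      funext i l
      rcases Fin.eq_castSucc_or_eq_last l with ⟨l', rfl⟩ | rfl
      · rw [Matrix.updateCol_ne (Fin.castSucc_lt_last l').ne]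
        simp only [Matrix.submatrix_apply, Matrix.of_apply, Fin.snoc_castSucc]
        conv_lhs => rw [← Fin.castSucc_castPred (cc (Fin.castSucc l')) (hne l'), Fin.snoc_castSucc]
      · simp only [Matrix.updateCol_self, Matrix.submatrix_apply, Matrix.of_apply, hlast,
          Fin.snoc_last]
    -- vanishing of terms with repeated column
    have hDzero : ∀ j ∈ S, D j = 0 := by
      intro j hj
      rw [hS, Finset.mem_image] at hj
      obtain ⟨l, -, hl⟩ := hj
      refine Matrix.det_zero_of_column_eq (Fin.castSucc_lt_last l).ne (fun x => ?_)
      simp [Fin.snoc_castSucc, Fin.snoc_last, hl]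
    -- expansion of the determinant
    have hexp : ∀ δ : ℝ, ε kk * (((Matrix.of fun i => Fin.snoc (A i)
        (∑ jj : Fin n, (-δ) ^ (n - 1 - jj.val) * A i jj)) :
          Matrix (Fin n) (Fin (n+1)) ℝ).submatrix r cc).det
        = δ ^ E * ∑ jj ∈ Sᶜ,
            (-1 : ℝ) ^ E * (-δ) ^ (jstar.val - jj.val) * (ε kk * D jj) := by
      intro δ
      rw [hsub δ]
      rw [det_updateColumn_sum_mul (A.submatrix r (Fin.snoc u jstar)) (Fin.last kk.val)
        Finset.univ (fun jj => (-δ) ^ (n - 1 - jj.val)) (fun jj i => A (r i) jj)]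
      have hsum : ∑ jj : Fin n, (-δ) ^ (n - 1 - jj.val) *
          ((A.submatrix r (Fin.snoc u jstar)).updateCol (Fin.last kk.val)
            (fun i => A (r i) jj)).det
          = ∑ jj ∈ Sᶜ, (-δ) ^ (n - 1 - jj.val) * D jj := by
        rw [← Finset.sum_subset (Finset.subset_univ Sᶜ)]
        · refine Finset.sum_congr rfl (fun jj _ => ?_)
          rw [hupdate δ jj]
        · intro x _ hx
          rw [hupdate δ x]
          have h0 : D x = 0 := hDzero x (not_not.mp (fun h => hx (Finset.mem_compl.mpr h)))
          simp only [hD] at h0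
          rw [h0, mul_zero]
      rw [hsum, Finset.mul_sum, Finset.mul_sum]
      refine Finset.sum_congr rfl (fun jj hjj => ?_)
      have hle : jj ≤ jstar := Finset.le_max' _ jj hjj
      have hsplit : n - 1 - jj.val = E + (jstar.val - jj.val) := by
        have h1 := jstar.isLt
        have h2 : jj.val ≤ jstar.val := hle
        omega
      rw [hsplit, pow_add]
      ring
    set H : ℝ → ℝ := fun δ => ∑ jj ∈ Sᶜ,
        (-1 : ℝ) ^ E * (-δ) ^ (jstar.val - jj.val) * (ε kk * D jj) with hH
    have hcont : Continuous H := by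
      apply continuous_finset_sum
      intro jj _
      exact (continuous_const.mul (continuous_neg.pow _)).mul continuous_const
    have hH0 : H 0 = (-1 : ℝ) ^ E * (ε kk * D jstar) := by
      simp only [hH]
      rw [Finset.sum_eq_single_of_mem jstar (Finset.mem_compl.mpr hjstarmem)]
      · norm_num
      · intro b hb hbne
        have hble : b ≤ jstar := Finset.le_max' _ b hb
        have hlt : b.val < jstar.val :=
          lt_of_le_of_ne hble (fun h => hbne (Fin.ext h))
        have hne0 : jstar.val - b.val ≠ 0 := by omega
        simp [zero_pow hne0]
    have hpos : 0 < H 0 := by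
      rw [hH0]
      have h1 : ∀ l, u l ≠ jstar := by
        intro l h
        apply hjstarmem
        rw [hS]
        exact h ▸ Finset.mem_image_of_mem u (Finset.mem_univ l)
      have h2 : ∀ x : Fin n, jstar < x → ∃ l, u l = x := by
        intro x hx
        have hx2 := hAbove x hx
        rw [hS, Finset.mem_image] at hx2
        obtain ⟨l, -, hl⟩ := hx2
        exact ⟨l, hl⟩
      have h3 := sign_lemma ε A hA kk r hr E u jstar humono h1 h2 hE
      have heq : (-1 : ℝ) ^ E * (ε kk * D jstar)
          = ε kk * ((-1 : ℝ) ^ E * (A.submatrix r (Fin.snoc u jstar)).det) := by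
        simp only [hD]; ring
      rw [heq]; exact h3
    have hHpos : ∀ᶠ δ in nhdsWithin (0:ℝ) (Set.Ioi 0), 0 < H δ :=
      Filter.Eventually.filter_mono nhdsWithin_le_nhds
        ((hcont.tendsto 0).eventually (eventually_gt_nhds hpos))
    filter_upwards [hHpos, eventually_mem_nhdsWithin] with δ h1 h2
    rw [hexp δ]
    simp only [hH] at h1
    exact mul_pos (pow_pos (Set.mem_Ioi.mp h2) E) h1

theorem stmt_3 (n : ℕ) (hn : 1 ≤ n) (ε : Fin n → ℝ) (hε : ∀ i, ε i = 1 ∨ ε i = -1)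
    (A : Matrix (Fin n) (Fin n) ℝ) (hA : IsSSRp n A ε) :
    ∃ c : Fin n → ℝ,
      IsSSRp n ((Matrix.of fun i => Fin.snoc (A i) (c i)) : Matrix (Fin n) (Fin (n + 1)) ℝ) ε := by
  have main : ∀ᶠ δ in nhdsWithin (0:ℝ) (Set.Ioi 0),
      IsSSRp n ((Matrix.of fun i => Fin.snoc (A i)
        (∑ jj : Fin n, (-δ) ^ (n - 1 - jj.val) * A i jj)) : Matrix (Fin n) (Fin (n+1)) ℝ) ε := by
    unfold IsSSRp
    rw [Filter.eventually_all]
    intro kk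
    rw [Filter.eventually_all]
    intro r
    rw [Filter.eventually_all]
    intro cc
    by_cases hr : StrictMono r
    · by_cases hc : StrictMono cc
      · exact (key_lemma ε A hA kk r cc hr hc).mono (fun δ h _ _ => h)
      · exact Filter.Eventually.of_forall (fun δ _ h2 => absurd h2 hc)
    · exact Filter.Eventually.of_forall (fun δ h1 => absurd h1 hr)
  obtain ⟨δ, hδ⟩ := main.exists
  exact ⟨fun i => ∑ jj : Fin n, (-δ) ^ (n - 1 - jj.val) * A i jj, hδ⟩
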